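/- Let q be a prime power, C ⊆ F_q^{2k} a linear code of dimension k and minimum distance d with g := k+1−d ≥ 1, and suppose c_0, …, c_{2g−2} ∈ ℚ satisfy both W_C(x,y) = M_{2k,k+1}(x,y) + (q−1)·Σ_{i=0}^{2g−2} c_i·C(2k,d+i)·(x−y)^{2k−d−i}·y^{d+i} and the relations c_{g−1+i} = q^{i}·c_{g−1−i} for all 1 ≤ i ≤ g−1. Then W_C(x,y) = M_{2k,k+1}(x,y) + Σ_{w=d}^{k−1} W_C^{(w)}·φ_w(x,y) + W_C^{(k)}·(x−y)^{k} y^{k}, where φ_w(x,y) = Σ_{s=w}^{k−1} C(2k−w, s−w)·[ (x−y)^{2k−s} y^{s} + q^{k−s}·(x−y)^{s} y^{2k−s} ] + C(2k−w, k)·(x−y)^{k} y^{k} for d ≤ w ≤ k−1. -/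

import Mathlib

open Finset Polynomial

/-- Coefficients of `(1 - X)^m`. -/
lemma fsd_coeff_one_sub_X_pow (m j : ℕ) :
    ((1 - X : ℚ[X]) ^ m).coeff j = (-1 : ℚ) ^ j * m.choose j := by
  have h1 : (1 - X : ℚ[X]) = C (-1) * (X + C (-1)) := by
    simp only [map_neg, map_one]; ring
  rw [h1, mul_pow, ← C_pow, coeff_C_mul, coeff_X_add_C_pow]
  rcases le_or_gt j m with hj | hj
  · have h2 : (-1:ℚ)^m = (-1)^j * (-1)^(m-j) := by
      rw [← pow_add, Nat.add_sub_cancel' hj]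
    have h3 : (-1:ℚ)^(m-j) * (-1:ℚ)^(m-j) = 1 := by
      rw [← pow_add]; exact Even.neg_one_pow ⟨m - j, rfl⟩
    linear_combination ((-1:ℚ)^(m-j) * (m.choose j : ℚ)) * h2
      + ((-1:ℚ)^j * (m.choose j : ℚ)) * h3
  · rw [Nat.choose_eq_zero_of_lt hj]; simp

/-- Reindexing a sum over an interval. -/
lemma fsd_sum_Icc_eq_sum_range (a b : ℕ) (f : ℕ → ℚ) :
    ∑ s ∈ Icc a b, f s = ∑ t ∈ range (b + 1 - a), f (a + t) := by
  rw [← Finset.Ico_add_one_right_eq_Icc, Finset.sum_Ico_eq_sum_range]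

/-- The alternating binomial inversion identity. -/
lemma fsd_alt_inv (a m : ℕ) (hm : m ≤ a) :
    ∑ t ∈ range (m+1), (-1:ℚ)^t * a.choose t * ((a - t).choose (m - t))
      = if m = 0 then 1 else 0 := by
  have expand : ∑ t ∈ range (a+1),
      C ((-1:ℚ)^t * a.choose t) * ((1 + X)^(a - t) * X ^ t) = 1 := by
    calc ∑ t ∈ range (a+1), C ((-1:ℚ)^t * a.choose t) * ((1 + X)^(a - t) * X ^ t)
        = ∑ t ∈ range (a+1), (-X)^t * (1+X)^(a-t) * (a.choose t : ℚ[X]) := by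
          refine Finset.sum_congr rfl fun t ht => ?_
          rw [neg_pow]
          simp only [map_mul, map_pow, map_neg, map_one, map_natCast]
          ring
      _ = ((-X) + (1+X))^a := ((Commute.all (-X : ℚ[X]) (1+X)).add_pow a).symm
      _ = 1 := by norm_num
  have hc := congrArg (fun p : ℚ[X] => p.coeff m) expand
  simp only [coeff_one] at hc
  rw [finset_sum_coeff] at hc
  have hterm : ∀ t ∈ range (a+1),
      (C ((-1:ℚ)^t * a.choose t) * ((1 + X)^(a - t) * X ^ t)).coeff m
        = if t ≤ m then (-1:ℚ)^t * a.choose t * ((a - t).choose (m - t)) else 0 := by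
    intro t ht
    rw [coeff_C_mul, coeff_mul_X_pow', coeff_one_add_X_pow]
    split_ifs <;> [rw [mul_assoc]; rw [mul_zero]]
  rw [Finset.sum_congr rfl hterm] at hc
  rw [← hc, ← Finset.sum_subset (Finset.range_subset_range.2 (by omega : m+1 ≤ a+1))
      (fun t ht ht' => if_neg (by simp only [Finset.mem_range] at ht ht'; omega))]
  exact Finset.sum_congr rfl fun t ht =>
    (if_pos (by simp only [Finset.mem_range] at ht; omega)).symm

/-- Coefficient extraction: the numbers `W w` for `d ≤ w ≤ k` in terms of the `A i`. -/
lemma fsd_coeffs (d k g : ℕ) (A W Mco : ℕ → ℚ) (hd1 : 1 ≤ d) (hg : 1 ≤ g)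
    (hgdef : k + 1 = d + g)
    (hsum : ∀ y : ℚ, 1 + ∑ w ∈ Icc d (2*k), W w * y^w
        = (1 + ∑ w ∈ Icc (k+1) (2*k), Mco w * y^w)
          + ∑ i ∈ range (2*g-1), A i * ((1-y)^(2*k-d-i) * y^(d+i))) :
    ∀ w, d ≤ w → w ≤ k → W w = ∑ i ∈ range (w-d+1),
      A i * ((-1:ℚ)^(w-d-i) * (((2*k-d-i).choose (w-d-i) : ℚ))) := by
  have hdk : d ≤ k := by omega
  have hPR : (1 + ∑ w ∈ Icc d (2*k), C (W w) * X^w : ℚ[X])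
      = (1 + ∑ w ∈ Icc (k+1) (2*k), C (Mco w) * X^w)
        + ∑ i ∈ range (2*g-1), C (A i) * ((1 - X)^(2*k-d-i) * X^(d+i)) := by
    apply Polynomial.funext
    intro y
    simp only [eval_add, eval_one, eval_finset_sum, eval_mul, eval_pow,
      eval_sub, eval_X, eval_C]
    exact hsum y
  intro w hdw hwk
  have hc := congrArg (fun p : ℚ[X] => p.coeff w) hPR
  have hcP : ((1 : ℚ[X]) + ∑ w' ∈ Icc d (2*k), C (W w') * X^w').coeff w = W w := by
    rw [coeff_add, coeff_one, if_neg (by omega), finset_sum_coeff, zero_add,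
      Finset.sum_eq_single_of_mem w (by simp only [Finset.mem_Icc]; omega)]
    · rw [coeff_C_mul, coeff_X_pow, if_pos rfl, mul_one]
    · intro b hb hbw
      rw [coeff_C_mul, coeff_X_pow, if_neg (by omega), mul_zero]
  have hcM : ((1 : ℚ[X]) + ∑ w' ∈ Icc (k+1) (2*k), C (Mco w') * X^w').coeff w = 0 := by
    rw [coeff_add, coeff_one, if_neg (by omega), finset_sum_coeff, zero_add]
    refine Finset.sum_eq_zero fun b hb => ?_
    have hb' : k + 1 ≤ b := (Finset.mem_Icc.1 hb).1
    rw [coeff_C_mul, coeff_X_pow, if_neg (by omega), mul_zero]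
  have hcR : (∑ i ∈ range (2*g-1), C (A i) * ((1 - X)^(2*k-d-i) * X^(d+i))).coeff w
      = ∑ i ∈ range (w - d + 1),
          A i * ((-1:ℚ)^(w-d-i) * (((2*k-d-i).choose (w-d-i) : ℚ))) := by
    rw [finset_sum_coeff]
    have hterm : ∀ i ∈ range (2*g-1),
        (C (A i) * ((1 - X)^(2*k-d-i) * X^(d+i))).coeff w
          = if d + i ≤ w then
              A i * ((-1:ℚ)^(w-d-i) * (((2*k-d-i).choose (w-d-i) : ℚ))) else 0 := by
      intro i hi
      rw [coeff_C_mul, coeff_mul_X_pow']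
      split_ifs with h
      · rw [fsd_coeff_one_sub_X_pow]
        simp only [Nat.sub_sub]
      · rw [mul_zero]
    rw [Finset.sum_congr rfl hterm,
      ← Finset.sum_subset (Finset.range_subset_range.2 (by omega : w - d + 1 ≤ 2*g-1))
        (fun i hi hi' => if_neg (by simp only [Finset.mem_range] at hi hi'; omega))]
    exact Finset.sum_congr rfl fun i hi =>
      if_pos (by simp only [Finset.mem_range] at hi; omega)
  rw [hcP, coeff_add, hcM, zero_add, hcR] at hc
  exact hc

/-- Binomial inversion of the triangular system. -/
lemma fsd_invert (d k g : ℕ) (A W : ℕ → ℚ) (hd1 : 1 ≤ d) (hg : 1 ≤ g)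
    (hgdef : k + 1 = d + g)
    (hE : ∀ w, d ≤ w → w ≤ k → W w = ∑ i ∈ range (w-d+1),
      A i * ((-1:ℚ)^(w-d-i) * (((2*k-d-i).choose (w-d-i) : ℚ)))) :
    ∀ j, j ≤ g - 1 → A j = ∑ w ∈ Icc d (d+j), W w * (((2*k-w).choose (d+j-w) : ℚ)) := by
  intro j hj
  have hdjk : d + j ≤ k := by omega
  have step1 : ∀ w ∈ Icc d (d+j), W w * (((2*k-w).choose (d+j-w) : ℚ))
      = ∑ i ∈ range (j+1), (if d + i ≤ w then
          A i * ((-1:ℚ)^(w-d-i) * (((2*k-d-i).choose (w-d-i) : ℚ)))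
            * (((2*k-w).choose (d+j-w) : ℚ)) else 0) := by
    intro w hw
    rw [Finset.mem_Icc] at hw
    rw [hE w hw.1 (by omega), Finset.sum_mul,
      ← Finset.sum_subset (Finset.range_subset_range.2 (by omega : w - d + 1 ≤ j + 1))
        (fun i hi hi' => if_neg (by simp only [Finset.mem_range] at hi hi'; omega))]
    exact Finset.sum_congr rfl fun i hi =>
      (if_pos (by simp only [Finset.mem_range] at hi; omega)).symm
  rw [Finset.sum_congr rfl step1, Finset.sum_comm]
  have inner : ∀ i ∈ range (j+1),
      (∑ w ∈ Icc d (d+j), if d + i ≤ w then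
          A i * ((-1:ℚ)^(w-d-i) * (((2*k-d-i).choose (w-d-i) : ℚ)))
            * (((2*k-w).choose (d+j-w) : ℚ)) else 0)
      = A i * (if j - i = 0 then 1 else 0) := by
    intro i hi
    rw [Finset.mem_range] at hi
    rw [← Finset.sum_subset (Finset.Icc_subset_Icc (by omega : d ≤ d + i) le_rfl)
        (fun w hw hw' => if_neg (by simp only [Finset.mem_Icc] at hw hw'; omega)),
      Finset.sum_congr rfl (fun w hw => if_pos (by
        simp only [Finset.mem_Icc] at hw; omega)),
      fsd_sum_Icc_eq_sum_range, show d + j + 1 - (d + i) = (j - i) + 1 from by omega]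
    have hterm : ∀ t ∈ range (j - i + 1),
        A i * ((-1:ℚ)^((d+i+t)-d-i) * (((2*k-d-i).choose ((d+i+t)-d-i) : ℚ)))
          * (((2*k-(d+i+t)).choose (d+j-(d+i+t)) : ℚ))
        = A i * ((-1:ℚ)^t * ((2*k-d-i).choose t : ℚ) * (((2*k-d-i-t).choose ((j-i)-t) : ℚ))) := by
      intro t ht
      rw [show d+i+t-d-i = t from by omega, show 2*k-(d+i+t) = 2*k-d-i-t from by omega,
        show d+j-(d+i+t) = j-i-t from by omega]
      ring
    rw [Finset.sum_congr rfl hterm, ← Finset.mul_sum,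
      fsd_alt_inv (2*k-d-i) (j-i) (by omega)]
  rw [Finset.sum_congr rfl inner,
    Finset.sum_eq_single_of_mem j (by simp only [Finset.mem_range]; omega)]
  · rw [if_pos (by omega), mul_one]
  · intro b hb hbj
    rw [if_neg (by simp only [Finset.mem_range] at hb; omega), mul_zero]

/-- Assembling the weight enumerator from the inverted coefficients. -/
lemma fsd_assemble (d k g q : ℕ) (c A W : ℕ → ℚ) (hd1 : 1 ≤ d) (hg : 1 ≤ g)
    (hgdef : k + 1 = d + g)
    (hAdef : ∀ i, A i = ((q:ℚ) - 1) * (c i * (((2*k).choose (d+i) : ℚ))))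
    (hrel : ∀ i, 1 ≤ i → i ≤ g - 1 → c (g - 1 + i) = (q : ℚ) ^ i * c (g - 1 - i))
    (hA : ∀ j, j ≤ g - 1 → A j = ∑ w ∈ Icc d (d+j), W w * (((2*k-w).choose (d+j-w) : ℚ)))
    (u v : ℚ) :
    ((q : ℚ) - 1) * ∑ i ∈ range (2 * g - 1),
        c i * (((2 * k).choose (d + i) : ℚ)) * u ^ (2 * k - d - i) * v ^ (d + i)
      = (∑ w ∈ Icc d (k - 1), W w *
          ((∑ s ∈ Icc w (k - 1), ((2 * k - w).choose (s - w) : ℚ) *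
            (u ^ (2 * k - s) * v ^ s + (q : ℚ) ^ (k - s) * u ^ s * v ^ (2 * k - s))) +
          ((2 * k - w).choose k : ℚ) * u ^ k * v ^ k))
        + W k * u ^ k * v ^ k := by
  have hdk : d ≤ k := by omega
  have step0 : ((q : ℚ) - 1) * ∑ i ∈ range (2 * g - 1),
        c i * (((2 * k).choose (d + i) : ℚ)) * u ^ (2 * k - d - i) * v ^ (d + i)
      = ∑ i ∈ range (2 * g - 1), A i * (u ^ (2 * k - d - i) * v ^ (d + i)) := by
    rw [Finset.mul_sum]
    refine Finset.sum_congr rfl fun i hi => ?_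
    rw [hAdef]; ring
  have step1 : ∑ i ∈ range (2 * g - 1), A i * (u ^ (2 * k - d - i) * v ^ (d + i))
      = ∑ i ∈ range g, A i * (u ^ (2 * k - d - i) * v ^ (d + i))
        + ∑ j ∈ range (g - 1),
            (q:ℚ)^(k-(d+j)) * A j * (u ^ (d + j) * v ^ (2 * k - (d + j))) := by
    rw [Finset.range_eq_Ico,
      ← Finset.sum_Ico_consecutive _ (Nat.zero_le g) (by omega : g ≤ 2*g-1),
      ← Finset.range_eq_Ico]
    congr 1
    refine (Finset.sum_nbij' (fun j => 2*g-2-j) (fun i => 2*g-2-i)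
      (fun j hj => by simp only [Finset.mem_range] at hj; simp only [Finset.mem_Ico]; omega)
      (fun i hi => by simp only [Finset.mem_Ico] at hi; simp only [Finset.mem_range]; omega)
      (fun j hj => by
        simp only [Finset.mem_range] at hj; show 2*g-2-(2*g-2-j) = j; omega)
      (fun i hi => by
        simp only [Finset.mem_Ico] at hi; show 2*g-2-(2*g-2-i) = i; omega)
      (fun j hj => ?_)).symm
    simp only [Finset.mem_range] at hj
    rw [show 2*k-d-(2*g-2-j) = d+j from by omega,
      show d+(2*g-2-j) = 2*k-(d+j) from by omega]
    have hc' : A (2*g-2-j) = (q:ℚ)^(k-(d+j)) * A j := by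
      rw [hAdef, hAdef,
        show 2*g-2-j = g-1+(g-1-j) from by omega,
        hrel (g-1-j) (by omega) (by omega),
        show g-1-(g-1-j) = j from by omega,
        show d+(g-1+(g-1-j)) = 2*k-(d+j) from by omega,
        Nat.choose_symm (by omega : d+j ≤ 2*k),
        show g-1-j = k-(d+j) from by omega]
      ring
    rw [hc']
  have step2 : ∑ i ∈ range g, A i * (u ^ (2 * k - d - i) * v ^ (d + i))
      = ∑ j ∈ range (g - 1), A j * (u ^ (2 * k - d - j) * v ^ (d + j))
        + A (g-1) * (u ^ k * v ^ k) := by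
    conv_lhs => rw [show g = (g-1)+1 from by omega]
    rw [Finset.sum_range_succ, show 2*k-d-(g-1) = k from by omega,
      show d+(g-1) = k from by omega]
  have step3 : ∑ w ∈ Icc d (k - 1), W w *
        (∑ s ∈ Icc w (k - 1), ((2 * k - w).choose (s - w) : ℚ) *
          (u ^ (2 * k - s) * v ^ s + (q : ℚ) ^ (k - s) * u ^ s * v ^ (2 * k - s)))
      = ∑ j ∈ range (g - 1), A j *
          (u ^ (2 * k - (d+j)) * v ^ (d+j)
            + (q : ℚ) ^ (k - (d+j)) * u ^ (d+j) * v ^ (2 * k - (d+j))) := by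
    calc ∑ w ∈ Icc d (k - 1), W w *
        (∑ s ∈ Icc w (k - 1), ((2 * k - w).choose (s - w) : ℚ) *
          (u ^ (2 * k - s) * v ^ s + (q : ℚ) ^ (k - s) * u ^ s * v ^ (2 * k - s)))
        = ∑ w ∈ Icc d (k - 1), ∑ s ∈ Icc d (k - 1),
            (if w ≤ s then W w * (((2 * k - w).choose (s - w) : ℚ) *
              (u ^ (2 * k - s) * v ^ s + (q : ℚ) ^ (k - s) * u ^ s * v ^ (2 * k - s)))
             else 0) := by
          refine Finset.sum_congr rfl fun w hw => ?_
          rw [Finset.mul_sum,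
            ← Finset.sum_subset (Finset.Icc_subset_Icc ((Finset.mem_Icc.1 hw).1) le_rfl)
              (fun s hs hs' => if_neg (by simp only [Finset.mem_Icc] at hs hs'; omega))]
          exact Finset.sum_congr rfl fun s hs =>
            (if_pos (Finset.mem_Icc.1 hs).1).symm
      _ = ∑ s ∈ Icc d (k - 1), ∑ w ∈ Icc d (k - 1),
            (if w ≤ s then W w * (((2 * k - w).choose (s - w) : ℚ) *
              (u ^ (2 * k - s) * v ^ s + (q : ℚ) ^ (k - s) * u ^ s * v ^ (2 * k - s)))
             else 0) := Finset.sum_comm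
      _ = ∑ s ∈ Icc d (k - 1), (∑ w ∈ Icc d s, W w * ((2 * k - w).choose (s - w) : ℚ)) *
            (u ^ (2 * k - s) * v ^ s + (q : ℚ) ^ (k - s) * u ^ s * v ^ (2 * k - s)) := by
          refine Finset.sum_congr rfl fun s hs => ?_
          rw [Finset.sum_mul,
            ← Finset.sum_subset (Finset.Icc_subset_Icc le_rfl ((Finset.mem_Icc.1 hs).2))
              (fun w hw hw' => if_neg (by simp only [Finset.mem_Icc] at hw hw'; omega))]
          refine Finset.sum_congr rfl fun w hw => ?_
          rw [if_pos (Finset.mem_Icc.1 hw).2]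
          ring
      _ = ∑ s ∈ Icc d (k - 1), A (s - d) *
            (u ^ (2 * k - s) * v ^ s + (q : ℚ) ^ (k - s) * u ^ s * v ^ (2 * k - s)) := by
          refine Finset.sum_congr rfl fun s hs => ?_
          have hs' := Finset.mem_Icc.1 hs
          rw [hA (s - d) (by omega), show d + (s - d) = s from by omega]
      _ = ∑ j ∈ range (g - 1), A j *
            (u ^ (2 * k - (d+j)) * v ^ (d+j)
              + (q : ℚ) ^ (k - (d+j)) * u ^ (d+j) * v ^ (2 * k - (d+j))) := by
          rw [fsd_sum_Icc_eq_sum_range, show k - 1 + 1 - d = g - 1 from by omega]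
          refine Finset.sum_congr rfl fun t ht => ?_
          rw [show d + t - d = t from by omega]
  have step4 : A (g-1)
      = ∑ w ∈ Icc d (k - 1), W w * ((2 * k - w).choose k : ℚ) + W k := by
    rw [hA (g-1) le_rfl, show d + (g-1) = k from by omega]
    have h1 : Finset.Icc d k = insert k (Finset.Icc d (k-1)) := by
      ext w'; simp only [Finset.mem_Icc, Finset.mem_insert]; omega
    rw [h1, Finset.sum_insert (by simp only [Finset.mem_Icc]; omega),
      show 2*k-k = k from by omega, show k-k = 0 from by omega,
      Nat.choose_zero_right, Nat.cast_one, mul_one, add_comm]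
    congr 1
    refine Finset.sum_congr rfl fun w hw => ?_
    have hw' := Finset.mem_Icc.1 hw
    have hsym := Nat.choose_symm (by omega : k ≤ 2*k-w)
    rw [show 2*k-w-k = k-w from by omega] at hsym
    rw [hsym]
  have hFG : ∀ j ∈ range (g - 1),
      A j * (u ^ (2 * k - d - j) * v ^ (d + j))
        + (q:ℚ)^(k-(d+j)) * A j * (u ^ (d + j) * v ^ (2 * k - (d + j)))
      = A j * (u ^ (2 * k - (d+j)) * v ^ (d+j)
          + (q : ℚ) ^ (k - (d+j)) * u ^ (d+j) * v ^ (2 * k - (d+j))) := by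
    intro j hj
    rw [show 2*k-d-j = 2*k-(d+j) from by omega]
    ring
  have expand : ∑ w ∈ Icc d (k - 1), W w *
        ((∑ s ∈ Icc w (k - 1), ((2 * k - w).choose (s - w) : ℚ) *
          (u ^ (2 * k - s) * v ^ s + (q : ℚ) ^ (k - s) * u ^ s * v ^ (2 * k - s))) +
          ((2 * k - w).choose k : ℚ) * u ^ k * v ^ k)
      = (∑ w ∈ Icc d (k - 1), W w *
          (∑ s ∈ Icc w (k - 1), ((2 * k - w).choose (s - w) : ℚ) *
            (u ^ (2 * k - s) * v ^ s + (q : ℚ) ^ (k - s) * u ^ s * v ^ (2 * k - s))))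
        + (∑ w ∈ Icc d (k - 1), W w * ((2 * k - w).choose k : ℚ)) * (u ^ k * v ^ k) := by
    rw [Finset.sum_mul, ← Finset.sum_add_distrib]
    refine Finset.sum_congr rfl fun w hw => ?_
    ring
  calc ((q : ℚ) - 1) * ∑ i ∈ range (2 * g - 1),
        c i * (((2 * k).choose (d + i) : ℚ)) * u ^ (2 * k - d - i) * v ^ (d + i)
      = ∑ i ∈ range (2 * g - 1), A i * (u ^ (2 * k - d - i) * v ^ (d + i)) := step0
    _ = (∑ j ∈ range (g - 1), A j * (u ^ (2 * k - d - j) * v ^ (d + j))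
          + A (g-1) * (u ^ k * v ^ k))
        + ∑ j ∈ range (g - 1),
            (q:ℚ)^(k-(d+j)) * A j * (u ^ (d + j) * v ^ (2 * k - (d + j))) := by
        rw [step1, step2]
    _ = ∑ j ∈ range (g - 1),
          (A j * (u ^ (2 * k - d - j) * v ^ (d + j))
            + (q:ℚ)^(k-(d+j)) * A j * (u ^ (d + j) * v ^ (2 * k - (d + j))))
        + A (g-1) * (u ^ k * v ^ k) := by
        rw [Finset.sum_add_distrib]; ring
    _ = ∑ j ∈ range (g - 1), A j *
          (u ^ (2 * k - (d+j)) * v ^ (d+j)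
            + (q : ℚ) ^ (k - (d+j)) * u ^ (d+j) * v ^ (2 * k - (d+j)))
        + A (g-1) * (u ^ k * v ^ k) := by
        rw [Finset.sum_congr rfl hFG]
    _ = (∑ w ∈ Icc d (k - 1), W w *
          (∑ s ∈ Icc w (k - 1), ((2 * k - w).choose (s - w) : ℚ) *
            (u ^ (2 * k - s) * v ^ s + (q : ℚ) ^ (k - s) * u ^ s * v ^ (2 * k - s))))
        + (∑ w ∈ Icc d (k - 1), W w * ((2 * k - w).choose k : ℚ) + W k)
          * (u ^ k * v ^ k) := by
        rw [← step3, step4]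
    _ = (∑ w ∈ Icc d (k - 1), W w *
          ((∑ s ∈ Icc w (k - 1), ((2 * k - w).choose (s - w) : ℚ) *
            (u ^ (2 * k - s) * v ^ s + (q : ℚ) ^ (k - s) * u ^ s * v ^ (2 * k - s))) +
          ((2 * k - w).choose k : ℚ) * u ^ k * v ^ k))
        + W k * u ^ k * v ^ k := by
        rw [expand]; ring


/-- The number `W_C^{(w)}` of codewords of the linear code `C` of Hamming weight `w`. -/
noncomputable def wtCount {F : Type*} [Field F] [Fintype F] [DecidableEq F] {n : ℕ}
    (C : Submodule F (Fin n → F)) (w : ℕ) : ℕ :=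
  Nat.card {c : Fin n → F // c ∈ C ∧ hammingNorm c = w}

/-- The homogeneous weight enumerator `W_C(x,y) = x^n + Σ_{w=d}^n W_C^{(w)} x^{n-w} y^w`
of a code `C` of minimum distance `d`, evaluated at rationals `x, y`. -/
noncomputable def wEnum {F : Type*} [Field F] [Fintype F] [DecidableEq F] {n : ℕ}
    (C : Submodule F (Fin n → F)) (d : ℕ) (x y : ℚ) : ℚ :=
  x ^ n + ∑ w ∈ Finset.Icc d n, (wtCount C w : ℚ) * x ^ (n - w) * y ^ w

/-- The MDS weight enumerator `M_{n,s}(x,y)` over a field with `q` elements,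
evaluated at rationals `x, y`. -/
noncomputable def Mds (q n s : ℕ) (x y : ℚ) : ℚ :=
  x ^ n + ∑ w ∈ Finset.Icc s n, (n.choose w : ℚ) *
    (∑ i ∈ Finset.range (w - s + 1),
      (-1 : ℚ) ^ i * (w.choose i : ℚ) * ((q : ℚ) ^ (w + 1 - s - i) - 1)) *
    x ^ (n - w) * y ^ w

/-- The polynomial `φ_w(x,y) = Σ_{s=w}^{k−1} C(2k−w, s−w)·[(x−y)^{2k−s} y^s +
q^{k−s} (x−y)^s y^{2k−s}] + C(2k−w, k)·(x−y)^k y^k`. -/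
noncomputable def phiPoly (q k w : ℕ) (x y : ℚ) : ℚ :=
  (∑ s ∈ Finset.Icc w (k - 1), ((2 * k - w).choose (s - w) : ℚ) *
    ((x - y) ^ (2 * k - s) * y ^ s + (q : ℚ) ^ (k - s) * (x - y) ^ s * y ^ (2 * k - s))) +
  ((2 * k - w).choose k : ℚ) * (x - y) ^ k * y ^ k

/-- For a formally self-dual linear code `C ⊆ F_q^{2k}` of dimension `k`, minimum
distance `d` and genus `g = k+1−d ≥ 1` (formal self-duality expressed by the relations
`c_{g−1+i} = q^i c_{g−1−i}` among the Duursma reduced coefficients), the weight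
enumerator is determined by the numbers of codewords of weight between `d` and `k`:
`W_C = M_{2k,k+1} + Σ_{w=d}^{k−1} W_C^{(w)} φ_w + W_C^{(k)} (x−y)^k y^k`. -/
theorem fsd_wenum_from_low_weights {F : Type*} [Field F] [Fintype F] [DecidableEq F]
    {k d g q : ℕ}
    (C : Submodule F (Fin (2 * k) → F))
    (hq : q = Fintype.card F)
    (hk : Module.finrank F C = k)
    (hd1 : ∀ c ∈ C, c ≠ 0 → d ≤ hammingNorm c)
    (hd2 : ∃ c ∈ C, c ≠ 0 ∧ hammingNorm c = d)
    (hg : 1 ≤ g) (hgdef : k + 1 = d + g)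
    (c : ℕ → ℚ)
    (hW : ∀ x y : ℚ, wEnum C d x y =
      Mds q (2 * k) (k + 1) x y +
        ((q : ℚ) - 1) * ∑ i ∈ Finset.range (2 * g - 1),
          c i * (((2 * k).choose (d + i) : ℚ)) * (x - y) ^ (2 * k - d - i) * y ^ (d + i))
    (hrel : ∀ i, 1 ≤ i → i ≤ g - 1 → c (g - 1 + i) = (q : ℚ) ^ i * c (g - 1 - i)) :
    ∀ x y : ℚ, wEnum C d x y =
      Mds q (2 * k) (k + 1) x y +
        (∑ w ∈ Finset.Icc d (k - 1), (wtCount C w : ℚ) * phiPoly q k w x y) +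
        (wtCount C k : ℚ) * (x - y) ^ k * y ^ k := by
  classical
  have hd1' : 1 ≤ d := by
    obtain ⟨c0, hc0C, hc0ne, hc0d⟩ := hd2
    have := hammingNorm_pos_iff.2 hc0ne
    omega
  have hdk : d ≤ k := by omega
  have hsum : ∀ y : ℚ, 1 + ∑ w ∈ Finset.Icc d (2*k), (wtCount C w : ℚ) * y^w
      = (1 + ∑ w ∈ Finset.Icc (k+1) (2*k), (((2*k).choose w : ℚ) *
          (∑ i ∈ Finset.range (w-(k+1)+1),
            (-1:ℚ)^i * (w.choose i : ℚ) * ((q:ℚ)^(w+1-(k+1)-i) - 1))) * y^w)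
        + ∑ i ∈ Finset.range (2*g-1),
            (((q:ℚ)-1) * (c i * (((2*k).choose (d+i) : ℚ)))) *
              ((1-y)^(2*k-d-i) * y^(d+i)) := by
    intro y
    have h := hW 1 y
    simp only [wEnum, Mds, one_pow, mul_one] at h
    rw [h, Finset.mul_sum]
    congr 1
    exact Finset.sum_congr rfl fun i hi => by ring
  have hE := fsd_coeffs d k g
    (fun i => ((q:ℚ)-1) * (c i * (((2*k).choose (d+i) : ℚ))))
    (fun w => (wtCount C w : ℚ))
    (fun w => ((2*k).choose w : ℚ) * (∑ i ∈ Finset.range (w-(k+1)+1),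
      (-1:ℚ)^i * (w.choose i : ℚ) * ((q:ℚ)^(w+1-(k+1)-i) - 1)))
    hd1' hg hgdef hsum
  have hA := fsd_invert d k g _ _ hd1' hg hgdef hE
  intro x y
  have key : ((q : ℚ) - 1) * ∑ i ∈ Finset.range (2 * g - 1),
        c i * (((2 * k).choose (d + i) : ℚ)) * (x - y) ^ (2 * k - d - i) * y ^ (d + i)
      = (∑ w ∈ Finset.Icc d (k - 1), (wtCount C w : ℚ) *
          ((∑ s ∈ Finset.Icc w (k - 1), ((2 * k - w).choose (s - w) : ℚ) *
            ((x - y) ^ (2 * k - s) * y ^ s +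
              (q : ℚ) ^ (k - s) * (x - y) ^ s * y ^ (2 * k - s))) +
          ((2 * k - w).choose k : ℚ) * (x - y) ^ k * y ^ k))
        + (wtCount C k : ℚ) * (x - y) ^ k * y ^ k :=
    fsd_assemble d k g q c _ _ hd1' hg hgdef (fun i => rfl) hrel hA (x - y) y
  rw [hW x y, key]
  simp only [phiPoly]
  ring
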